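/- Let n ≥ 1 and T ≥ n be integers, let U, Y be real data sequences of length T+1, and let σ ∈ ℂ. The linear system H_n(U)·ξ = γ_n(σ), H_n(Y)·ξ = M·γ_n(σ) has a solution (ξ, M) ∈ ℂ^{T−n+1} × ℂ if and only if rank [H_n(U), 0, γ_n(σ); H_n(Y), γ_n(σ), 0] = rank [H_n(U), 0; H_n(Y), γ_n(σ)], where ranks are of complex matrices. -/

import Mathlib

open Matrix

/-- The Hankel matrix of depth `n` (over `ℂ`) of a real data sequence `u = (u 0, …, u T)`:
its `(i,j)` entry is `u (i+j)`. -/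
noncomputable def hankelC (u : ℕ → ℝ) (n T : ℕ) : Matrix (Fin (n + 1)) (Fin (T - n + 1)) ℂ :=
  fun i j => (u ((i : ℕ) + (j : ℕ)) : ℂ)

/-- `γ_n(σ) = (1, σ, …, σ^n)ᵀ`. -/
noncomputable def gammaVec (n : ℕ) (σ : ℂ) : Fin (n + 1) → ℂ :=
  fun i => σ ^ (i : ℕ)

/-- A parameter row vector `θ = [q, -p] ∈ ℝ^{2n+1}` belongs to `Σ_{U,Y}`, i.e.
`[q -p]·[H_n(U); H̄_n(Y)] = [y_n ⋯ y_T]`. -/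
def inSigmaUY (n T : ℕ) (u y : ℕ → ℝ) (θ : Fin (2 * n + 1) → ℝ) : Prop :=
  ∀ j : Fin (T - n + 1),
    (∑ i : Fin (2 * n + 1),
      θ i * (if (i : ℕ) < n + 1 then u ((i : ℕ) + (j : ℕ))
             else y ((i : ℕ) - (n + 1) + (j : ℕ)))) = y (n + (j : ℕ))

/-- A parameter row vector `θ = [q, -p] ∈ ℝ^{2n+1}` belongs to `Σ_{σ,M}`, i.e.
`[q -p]·[γ_n(σ); M·γ_{n-1}(σ)] = M·σ^n`. -/
def inSigmaM (n : ℕ) (σ M : ℂ) (θ : Fin (2 * n + 1) → ℝ) : Prop :=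
  (∑ i : Fin (2 * n + 1),
    (θ i : ℂ) * (if (i : ℕ) < n + 1 then σ ^ (i : ℕ)
                 else M * σ ^ ((i : ℕ) - (n + 1)))) = M * σ ^ n

/-- The stacked matrix `[H_n(U); H_n(Y)]` over `ℂ`. -/
noncomputable def stackUY (u y : ℕ → ℝ) (n T : ℕ) :
    Matrix (Fin (n + 1) ⊕ Fin (n + 1)) (Fin (T - n + 1)) ℂ :=
  Matrix.fromRows (hankelC u n T) (hankelC y n T)

/-- The column `(0; γ_n(σ))`. -/
noncomputable def colZeroGamma (n : ℕ) (σ : ℂ) :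
    Matrix (Fin (n + 1) ⊕ Fin (n + 1)) (Fin 1) ℂ :=
  Matrix.of fun i _ => Sum.elim (fun _ : Fin (n + 1) => (0 : ℂ)) (fun k : Fin (n + 1) => σ ^ (k : ℕ)) i

/-- The column `(γ_n(σ); 0)`. -/
noncomputable def colGammaZero (n : ℕ) (σ : ℂ) :
    Matrix (Fin (n + 1) ⊕ Fin (n + 1)) (Fin 1) ℂ :=
  Matrix.of fun i _ => Sum.elim (fun k : Fin (n + 1) => σ ^ (k : ℕ)) (fun _ : Fin (n + 1) => (0 : ℂ)) i

/-- The linear system `H_n(U)·ξ = γ_n(σ)`, `H_n(Y)·ξ = M·γ_n(σ)` has a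
solution `(ξ, M)` iff
`rank [H_n(U), 0, γ_n(σ); H_n(Y), γ_n(σ), 0] = rank [H_n(U), 0; H_n(Y), γ_n(σ)]`. -/

lemma rank_aux_gen {m p : Type*} [Fintype m] [Fintype p] [DecidableEq m]
    (A : Matrix m p ℂ) (b : m → ℂ) :
    (∃ x, A.mulVec x = b) ↔
      (Matrix.fromCols A (Matrix.of fun i (_ : Fin 1) => b i)).rank = A.rank := by
  set B : Matrix m (Fin 1) ℂ := Matrix.of fun i (_ : Fin 1) => b i with hB
  have hBmul : ∀ v : Fin 1 → ℂ, B.mulVec v = v 0 • b := by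
    intro v
    funext i
    simp [hB, Matrix.mulVec, dotProduct, Fin.sum_univ_one, mul_comm]
  have hbB : B.mulVec (fun _ => 1) = b := by rw [hBmul]; simp
  have hrange : ∀ v : p ⊕ Fin 1 → ℂ,
      (Matrix.fromCols A B).mulVec v = A.mulVec (v ∘ Sum.inl) + B.mulVec (v ∘ Sum.inr) := by
    intro v
    have := Matrix.fromCols_mulVec_sumElim A B (v ∘ Sum.inl) (v ∘ Sum.inr)
    rwa [Sum.elim_comp_inl_inr] at this
  have hle : LinearMap.range A.mulVecLin ≤ LinearMap.range (Matrix.fromCols A B).mulVecLin := by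
    rintro w ⟨x, rfl⟩
    refine ⟨Sum.elim x 0, ?_⟩
    simp [Matrix.mulVecLin_apply, Matrix.fromCols_mulVec_sumElim, hBmul]
  constructor
  · rintro ⟨x, hx⟩
    have heq : LinearMap.range (Matrix.fromCols A B).mulVecLin
        = LinearMap.range A.mulVecLin := by
      refine le_antisymm ?_ hle
      rintro w ⟨v, rfl⟩
      simp only [Matrix.mulVecLin_apply]
      rw [hrange, hBmul, ← hx, ← Matrix.mulVec_smul, ← Matrix.mulVec_add]
      exact ⟨_, rfl⟩
    rw [Matrix.rank, Matrix.rank, heq]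
  · intro hrank
    have hfin : LinearMap.range (Matrix.fromCols A B).mulVecLin
        = LinearMap.range A.mulVecLin := by
      symm
      apply Submodule.eq_of_le_of_finrank_le hle
      rw [← Matrix.rank, ← Matrix.rank, hrank]
    have hbmem : b ∈ LinearMap.range (Matrix.fromCols A B).mulVecLin := by
      refine ⟨Sum.elim 0 (fun _ => 1), ?_⟩
      simp [Matrix.mulVecLin_apply, Matrix.fromCols_mulVec_sumElim, hbB]
    rw [hfin] at hbmem
    exact hbmem

theorem solvable_iff_rank_condition (n T : ℕ) (hn : 1 ≤ n) (hT : n ≤ T)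
    (u y : ℕ → ℝ) (σ : ℂ) :
    (∃ (ξ : Fin (T - n + 1) → ℂ) (M : ℂ),
        (hankelC u n T).mulVec ξ = gammaVec n σ ∧
        (hankelC y n T).mulVec ξ = M • gammaVec n σ) ↔
      (Matrix.fromCols (Matrix.fromCols (stackUY u y n T) (colZeroGamma n σ))
          (colGammaZero n σ)).rank =
        (Matrix.fromCols (stackUY u y n T) (colZeroGamma n σ)).rank := by
  -- identify the appended columns as column matrices
  set A := Matrix.fromCols (stackUY u y n T) (colZeroGamma n σ) with hA
  have key := rank_aux_gen A
      (Sum.elim (fun k : Fin (n + 1) => σ ^ (k : ℕ)) (fun _ : Fin (n + 1) => (0 : ℂ)))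
  have hcol : colGammaZero n σ = Matrix.of fun i (_ : Fin 1) =>
      Sum.elim (fun k : Fin (n + 1) => σ ^ (k : ℕ)) (fun _ : Fin (n + 1) => (0 : ℂ)) i := rfl
  rw [hcol, ← key]
  -- now reduce to solvability of the combined system
  constructor
  · rintro ⟨ξ, M, h1, h2⟩
    refine ⟨Sum.elim ξ (fun _ => -M), ?_⟩
    rw [hA, Matrix.fromCols_mulVec_sumElim]
    funext i
    have hz : (colZeroGamma n σ).mulVec (fun _ => -M) =
        Sum.elim (fun _ : Fin (n + 1) => (0 : ℂ)) (fun k : Fin (n + 1) => -M * σ ^ (k : ℕ)) := by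
      funext j
      cases j with
      | inl j => simp [colZeroGamma, Matrix.mulVec, dotProduct, Fin.sum_univ_one]
      | inr j =>
          simp [colZeroGamma, Matrix.mulVec, dotProduct, Fin.sum_univ_one]
          ring
    rw [stackUY, Matrix.fromRows_mulVec, hz]
    cases i with
    | inl i => simp [h1, gammaVec]
    | inr i =>
        have := congrFun h2 i
        simp only [Pi.smul_apply, smul_eq_mul, gammaVec] at this
        simp [this]
  · rintro ⟨x, hx⟩
    refine ⟨x ∘ Sum.inl, -(x (Sum.inr 0)), ?_, ?_⟩
    · funext i
      have := congrFun hx (Sum.inl i)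
      have hxe : x = Sum.elim (x ∘ Sum.inl) (x ∘ Sum.inr) := by
        funext j; cases j <;> rfl
      rw [hA, hxe, Matrix.fromCols_mulVec_sumElim] at hx
      have h := congrFun hx (Sum.inl i)
      simp only [Pi.add_apply] at h
      have hz : (colZeroGamma n σ).mulVec (x ∘ Sum.inr) (Sum.inl i) = 0 := by
        simp [colZeroGamma, Matrix.mulVec, dotProduct, Fin.sum_univ_one]
      rw [stackUY, Matrix.fromRows_mulVec] at h
      simp only [Sum.elim_inl, hz, add_zero] at h
      simpa [gammaVec] using h
    · funext i
      have hxe : x = Sum.elim (x ∘ Sum.inl) (x ∘ Sum.inr) := by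
        funext j; cases j <;> rfl
      rw [hA, hxe, Matrix.fromCols_mulVec_sumElim] at hx
      have h := congrFun hx (Sum.inr i)
      simp only [Pi.add_apply] at h
      have hz : (colZeroGamma n σ).mulVec (x ∘ Sum.inr) (Sum.inr i) =
          x (Sum.inr 0) * σ ^ (i : ℕ) := by
        simp [colZeroGamma, Matrix.mulVec, dotProduct, Fin.sum_univ_one]
        ring
      rw [stackUY, Matrix.fromRows_mulVec] at h
      simp only [Sum.elim_inr, hz] at h
      simp only [Pi.smul_apply, smul_eq_mul, gammaVec]
      have : (hankelC y n T).mulVec (x ∘ Sum.inl) i = -(x (Sum.inr 0) * σ ^ (i : ℕ)) := by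
        linear_combination h
      rw [this]; ring
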